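/- Let Z₁, Z₂, Z, Δ be real symmetric n×n matrices and ζ ~ N(0, I_n). Define the random variable θ̂_i = (Z₁ Δ Z₂ ζ)_i (Z ζ)_i for each coordinate i. Then E[θ̂_i] = (Z₁ Δ Z₂ Z)_ii, and E[θ̂_i²] ≤ 3 (Z₁ Δ Z₂² Δ Z₁)_ii (Z²)_ii. -/

import Mathlib

open Matrix MeasureTheory ProbabilityTheory

open MeasureTheory ProbabilityTheory Real
open scoped ENNReal NNReal

noncomputable def gden (x : ℝ) : ℝ := (Real.sqrt (2 * π))⁻¹ * Real.exp (-x ^ 2 / 2)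

lemma gden_nonneg (x : ℝ) : 0 ≤ gden x := by unfold gden; positivity

lemma gden_eq : gaussianPDFReal 0 1 = gden := by
  ext x; simp [gaussianPDFReal, gden]

lemma integral_gaussian_eq (g : ℝ → ℝ) :
    ∫ x, g x ∂(gaussianReal 0 1) = ∫ x, gden x * g x := by
  rw [gaussianReal_of_var_ne_zero 0 one_ne_zero]
  have hmeas : Measurable fun x => (gaussianPDFReal 0 1 x).toNNReal :=
    (measurable_gaussianPDFReal 0 1).real_toNNReal
  have : (gaussianPDF 0 1) = fun x => ((fun y => (gaussianPDFReal 0 1 y).toNNReal) x : ℝ≥0∞) := by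
    ext x; simp [gaussianPDF, ENNReal.ofReal]
  rw [this, integral_withDensity_eq_integral_smul hmeas]
  congr 1; ext x
  rw [NNReal.smul_def, Real.coe_toNNReal _ (gaussianPDFReal_nonneg 0 1 x), gden_eq, smul_eq_mul]

lemma integrable_gaussian_iff (g : ℝ → ℝ) :
    Integrable g (gaussianReal 0 1) ↔ Integrable (fun x => gden x * g x) := by
  rw [gaussianReal_of_var_ne_zero 0 one_ne_zero]
  have hmeas : Measurable fun x => (gaussianPDFReal 0 1 x).toNNReal :=
    (measurable_gaussianPDFReal 0 1).real_toNNReal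
  have : (gaussianPDF 0 1) = fun x => ((fun y => (gaussianPDFReal 0 1 y).toNNReal) x : ℝ≥0∞) := by
    ext x; simp [gaussianPDF, ENNReal.ofReal]
  rw [this, integrable_withDensity_iff_integrable_smul hmeas]
  constructor <;> intro h <;> refine h.congr (Filter.Eventually.of_forall fun x => ?_) <;>
    simp only [NNReal.smul_def, Real.coe_toNNReal _ (gaussianPDFReal_nonneg 0 1 x), gden_eq,
      smul_eq_mul, Real.coe_toNNReal _ (gden_nonneg x)]

lemma integrable_pow_gauss (k : ℕ) :
    Integrable (fun x : ℝ => x ^ k * Real.exp (-x ^ 2 / 2)) := by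
  have h := integrable_rpow_mul_exp_neg_mul_sq (b := 1/2) (by norm_num)
    (s := (k : ℝ)) (by exact_mod_cast neg_one_lt_zero.trans_le (Nat.cast_nonneg k))
  refine h.congr (Filter.Eventually.of_forall fun x => ?_)
  simp only [Real.rpow_natCast]
  ring_nf

lemma E0 : ∫ x : ℝ, Real.exp (-x ^ 2 / 2) = Real.sqrt (2 * π) := by
  have h := integral_gaussian (1/2)
  rw [show π / (1/2 : ℝ) = 2 * π by ring] at h
  rw [← h]
  congr 1; ext x; ring_nf

lemma integral_comp_neg'' (f : ℝ → ℝ) : ∫ x : ℝ, f (-x) = ∫ x : ℝ, f x := by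
  have A : MeasurePreserving (fun x : ℝ => -x) volume volume :=
    ⟨measurable_neg, Measure.map_neg_eq_self _⟩
  exact A.integral_comp (Homeomorph.neg ℝ).isClosedEmbedding.measurableEmbedding f

lemma Eodd (k : ℕ) (hk : Odd k) : ∫ x : ℝ, x ^ k * Real.exp (-x ^ 2 / 2) = 0 := by
  have h1 : ∀ x : ℝ, (-x) ^ k * Real.exp (-(-x) ^ 2 / 2)
      = -(x ^ k * Real.exp (-x ^ 2 / 2)) := by
    intro x
    rw [hk.neg_pow, neg_sq]
    ring
  have h2 := integral_comp_neg'' (fun x => x ^ k * Real.exp (-x ^ 2 / 2))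
  simp only [h1, integral_neg] at h2
  linarith

lemma tendsto_pow_gauss (m : ℕ) :
    Filter.Tendsto (fun x : ℝ => x ^ m * Real.exp (-x ^ 2 / 2)) Filter.atTop (nhds 0) := by
  have h := rpow_mul_exp_neg_mul_sq_isLittleO_exp_neg (b := 1/2) (by norm_num) (m : ℝ)
  have heq : (fun x : ℝ => x ^ (m : ℝ) * Real.exp (-(1/2) * x ^ 2))
      = fun x : ℝ => x ^ m * Real.exp (-x ^ 2 / 2) := by
    funext x; rw [Real.rpow_natCast]; ring_nf
  rw [heq] at h
  have hlim : Filter.Tendsto (fun x : ℝ => Real.exp (-(1/2) * x)) Filter.atTop (nhds 0) := by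
    apply Real.tendsto_exp_atBot.comp
    have : Filter.Tendsto (fun x : ℝ => (1/2 : ℝ) * x) Filter.atTop Filter.atTop :=
      Filter.Tendsto.const_mul_atTop (by norm_num) Filter.tendsto_id
    have h2 := Filter.tendsto_neg_atTop_atBot.comp this
    refine h2.congr fun x => ?_
    show -((1/2 : ℝ) * x) = -(1/2) * x
    ring
  exact h.isBigO.trans_tendsto hlim

lemma Estep (k : ℕ) :
    ∫ x : ℝ, x ^ (k + 2) * Real.exp (-x ^ 2 / 2)
      = (k + 1 : ℝ) * ∫ x : ℝ, x ^ k * Real.exp (-x ^ 2 / 2) := by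
  set f : ℝ → ℝ := fun x => (k + 1 : ℝ) * (x ^ k * Real.exp (-x ^ 2 / 2))
    - x ^ (k + 2) * Real.exp (-x ^ 2 / 2) with hf_def
  set g : ℝ → ℝ := fun x => x ^ (k + 1) * Real.exp (-x ^ 2 / 2) with hg_def
  have hf : Integrable f := ((integrable_pow_gauss k).const_mul _).sub (integrable_pow_gauss (k + 2))
  have hderiv : ∀ x : ℝ, HasDerivAt g (f x) x := by
    intro x
    have h1 : HasDerivAt (fun x : ℝ => x ^ (k + 1)) ((k + 1 : ℝ) * x ^ k) x := by
      simpa using hasDerivAt_pow (k + 1) x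
    have h2 : HasDerivAt (fun x : ℝ => Real.exp (-x ^ 2 / 2))
        (Real.exp (-x ^ 2 / 2) * (-x)) x := by
      have h3 : HasDerivAt (fun x : ℝ => -x ^ 2 / 2) (-x) x := by
        have := (hasDerivAt_pow 2 x).neg.div_const 2
        simpa using this.congr_deriv (by push_cast; ring)
      exact (Real.hasDerivAt_exp _).comp x h3
    have := h1.mul h2
    refine this.congr_deriv ?_
    simp only [hf_def]
    ring
  have h1 : ∀ R : ℝ, ∫ x in (-R)..R, f x = g R - g (-R) := fun R =>
    intervalIntegral.integral_eq_sub_of_hasDerivAt (fun x _ => hderiv x)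
      hf.intervalIntegrable
  have h2 : Filter.Tendsto (fun R : ℝ => ∫ x in (-R)..R, f x) Filter.atTop (nhds (∫ x, f x)) :=
    intervalIntegral_tendsto_integral hf Filter.tendsto_neg_atTop_atBot Filter.tendsto_id
  have h3 : Filter.Tendsto (fun R : ℝ => g R - g (-R)) Filter.atTop (nhds 0) := by
    have ha := tendsto_pow_gauss (k + 1)
    have hb : Filter.Tendsto (fun R : ℝ => g (-R)) Filter.atTop (nhds 0) := by
      have : (fun R : ℝ => g (-R)) = fun R : ℝ => (-1 : ℝ) ^ (k + 1) * (R ^ (k + 1) * Real.exp (-R ^ 2 / 2)) := by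
        funext R; simp only [hg_def]; ring_nf
      rw [this]
      simpa using ha.const_mul ((-1 : ℝ) ^ (k + 1))
    simpa using ha.sub hb
  have h4 : ∫ x, f x = 0 := by
    have := h2.congr' (Filter.Eventually.of_forall fun R => h1 R)
    exact tendsto_nhds_unique this h3
  rw [hf_def] at h4
  rw [integral_sub ((integrable_pow_gauss k).const_mul _) (integrable_pow_gauss (k + 2)),
    integral_const_mul] at h4
  linarith

lemma E2 : ∫ x : ℝ, x ^ 2 * Real.exp (-x ^ 2 / 2) = Real.sqrt (2 * π) := by
  have h := Estep 0
  simpa [E0] using h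

lemma E4 : ∫ x : ℝ, x ^ 4 * Real.exp (-x ^ 2 / 2) = 3 * Real.sqrt (2 * π) := by
  have h := Estep 2
  rw [E2] at h
  norm_num at h
  rw [Real.sqrt_mul (by norm_num : (0:ℝ) ≤ 2) π]
  linarith

noncomputable def gm (k : ℕ) : ℝ := ∫ x, x ^ k ∂(gaussianReal 0 1)

lemma sqrt_two_pi_pos : 0 < Real.sqrt (2 * π) := Real.sqrt_pos.mpr (by positivity)

lemma gm_eq (k : ℕ) : gm k = (Real.sqrt (2 * π))⁻¹ * ∫ x : ℝ, x ^ k * Real.exp (-x ^ 2 / 2) := by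
  rw [gm, integral_gaussian_eq, ← integral_const_mul]
  congr 1; funext x; simp only [gden]; ring

lemma integrable_pow_gm (k : ℕ) : Integrable (fun x => x ^ k) (gaussianReal 0 1) := by
  rw [integrable_gaussian_iff]
  have := (integrable_pow_gauss k).const_mul (Real.sqrt (2 * π))⁻¹
  refine this.congr (Filter.Eventually.of_forall fun x => ?_)
  simp only [gden]; ring

lemma gm0 : gm 0 = 1 := by
  rw [gm_eq]
  simp only [pow_zero, one_mul, E0]
  exact inv_mul_cancel₀ sqrt_two_pi_pos.ne'

lemma gm1 : gm 1 = 0 := by rw [gm_eq, Eodd 1 odd_one, mul_zero]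

lemma gm2 : gm 2 = 1 := by
  rw [gm_eq, E2]; exact inv_mul_cancel₀ sqrt_two_pi_pos.ne'

lemma gm3 : gm 3 = 0 := by rw [gm_eq, Eodd 3 (by decide), mul_zero]

lemma gm4 : gm 4 = 3 := by
  rw [gm_eq, E4, ← mul_assoc, mul_comm _ 3, mul_assoc, inv_mul_cancel₀ sqrt_two_pi_pos.ne',
    mul_one]

lemma integral_pi_gauss {n : ℕ} (f : Fin n → ℝ → ℝ) :
    ∫ x : Fin n → ℝ, ∏ i, f i (x i) ∂(Measure.pi fun _ => gaussianReal 0 1)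
      = ∏ i, ∫ x, f i x ∂(gaussianReal 0 1) := by
  letI : MeasureSpace ℝ := ⟨gaussianReal 0 1⟩
  haveI : SigmaFinite (volume : Measure ℝ) := inferInstanceAs (SigmaFinite (gaussianReal 0 1))
  exact MeasureTheory.integral_fintype_prod_eq_prod f

lemma integrable_pi_gauss {n : ℕ} (f : Fin n → ℝ → ℝ)
    (hf : ∀ i, Integrable (f i) (gaussianReal 0 1)) :
    Integrable (fun x : Fin n → ℝ => ∏ i, f i (x i))
      (Measure.pi fun _ => gaussianReal 0 1) := by
  letI : MeasureSpace ℝ := ⟨gaussianReal 0 1⟩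
  haveI : SigmaFinite (volume : Measure ℝ) := inferInstanceAs (SigmaFinite (gaussianReal 0 1))
  exact MeasureTheory.Integrable.fintype_prod hf

lemma prod_pow_two {n : ℕ} (j k : Fin n) (ζ : Fin n → ℝ) :
    ζ j * ζ k = ∏ t, ζ t ^ ((if j = t then 1 else 0) + (if k = t then 1 else 0)) := by
  simp only [pow_add, pow_ite, pow_one, pow_zero, Finset.prod_mul_distrib,
    Finset.prod_ite_eq, Finset.mem_univ, if_true]

lemma gauss_M2 {n : ℕ} (j k : Fin n) :
    ∫ ζ : Fin n → ℝ, ζ j * ζ k ∂(Measure.pi fun _ => gaussianReal 0 1)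
      = if j = k then 1 else 0 := by
  have h1 : (∫ ζ : Fin n → ℝ, ζ j * ζ k ∂(Measure.pi fun _ => gaussianReal 0 1))
      = ∏ t, gm ((if j = t then 1 else 0) + (if k = t then 1 else 0)) := by
    rw [show (fun ζ : Fin n → ℝ => ζ j * ζ k)
        = fun ζ => ∏ t, ζ t ^ ((if j = t then 1 else 0) + (if k = t then 1 else 0)) from
      funext fun ζ => prod_pow_two j k ζ]
    exact integral_pi_gauss _
  rw [h1]
  by_cases hjk : j = k
  · subst hjk
    rw [if_pos rfl]
    rw [Finset.prod_congr rfl (fun t _ => ?_), Finset.prod_const_one]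
    by_cases h : j = t <;> simp [h, gm2, gm0]
  · rw [if_neg hjk]
    refine Finset.prod_eq_zero (Finset.mem_univ j) ?_
    rw [if_pos rfl, if_neg (fun h => hjk h.symm)]
    exact gm1

open MeasureTheory ProbabilityTheory Real
open scoped ENNReal NNReal

lemma prod_pow_four {n : ℕ} (j k l m : Fin n) (ζ : Fin n → ℝ) :
    ζ j * ζ k * ζ l * ζ m = ∏ t, ζ t ^
      ((if j = t then 1 else 0) + (if k = t then 1 else 0)
        + (if l = t then 1 else 0) + (if m = t then 1 else 0)) := by
  simp only [pow_add, pow_ite, pow_one, pow_zero, Finset.prod_mul_distrib,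
    Finset.prod_ite_eq, Finset.mem_univ, if_true]

lemma gauss_M4 {n : ℕ} (j k l m : Fin n) :
    ∫ ζ : Fin n → ℝ, ζ j * ζ k * ζ l * ζ m ∂(Measure.pi fun _ => gaussianReal 0 1)
      = (if j = k then (1:ℝ) else 0) * (if l = m then 1 else 0)
        + (if j = l then 1 else 0) * (if k = m then 1 else 0)
        + (if j = m then 1 else 0) * (if k = l then 1 else 0) := by
  have h1 : (∫ ζ : Fin n → ℝ, ζ j * ζ k * ζ l * ζ m ∂(Measure.pi fun _ => gaussianReal 0 1))
      = ∏ t, gm ((if j = t then 1 else 0) + (if k = t then 1 else 0)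
        + (if l = t then 1 else 0) + (if m = t then 1 else 0)) := by
    rw [show (fun ζ : Fin n → ℝ => ζ j * ζ k * ζ l * ζ m)
        = fun ζ => ∏ t, ζ t ^ ((if j = t then 1 else 0) + (if k = t then 1 else 0)
          + (if l = t then 1 else 0) + (if m = t then 1 else 0)) from
      funext fun ζ => prod_pow_four j k l m ζ]
    exact integral_pi_gauss _
  rw [h1]
  by_cases hjk : j = k
  · subst hjk
    by_cases hlm : l = m
    · subst hlm
      by_cases hjl : j = l
      · subst hjl
        rw [Finset.prod_congr rfl (fun t _ =>
          show gm _ = if j = t then (3:ℝ) else 1 from by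
            by_cases h : j = t <;> simp [h, gm4, gm0]), Finset.prod_ite_eq]
        norm_num
      · rw [Finset.prod_congr rfl (fun t _ => show gm _ = (1:ℝ) from by
          by_cases h1 : j = t <;> by_cases h2 : l = t <;>
            first
            | exact absurd (h1.trans h2.symm) hjl
            | simp [h1, h2, gm2, gm0]), Finset.prod_const_one]
        simp [hjl]
    · by_cases hmj : m = j
      · refine (Finset.prod_eq_zero (Finset.mem_univ l) ?_).trans ?_
        · have hjl : ¬ j = l := fun h => hlm (h.symm.trans hmj.symm)
          have hml : ¬ m = l := fun h => hlm h.symm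
          simp [hjl, hlm, hml, gm1]
        · have hjl : ¬ j = l := fun h => hlm (h.symm.trans hmj.symm)
          have hlj : ¬ l = j := fun h => hjl h.symm
          simp [hlm, hjl, hmj, hlj]
      · refine (Finset.prod_eq_zero (Finset.mem_univ m) ?_).trans ?_
        · have hjm : ¬ j = m := fun h => hmj h.symm
          simp [hjm, hlm, gm1]
        · have hjm : ¬ j = m := fun h => hmj h.symm
          simp [hlm, hjm]
  · by_cases hlm : l = m
    · subst hlm
      by_cases hlj : l = j
      · refine (Finset.prod_eq_zero (Finset.mem_univ k) ?_).trans ?_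
        · have hjk' : ¬ j = k := hjk
          have hlk : ¬ l = k := fun h => hjk (hlj.symm.trans h)
          simp [hjk', hlk, gm1]
        · have hkl : ¬ k = l := fun h => hjk (h.trans hlj).symm
          simp [hjk, hkl]
      · refine (Finset.prod_eq_zero (Finset.mem_univ j) ?_).trans ?_
        · have hkj : ¬ k = j := fun h => hjk h.symm
          have hljx : ¬ l = j := hlj
          simp [hkj, hljx, gm1]
        · have hjl : ¬ j = l := fun h => hlj h.symm
          simp [hjk, hjl]
    · by_cases hjl : j = l
      · subst hjl
        by_cases hkm : k = m
        · subst hkm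
          rw [Finset.prod_congr rfl (fun t _ => show gm _ = (1:ℝ) from by
            by_cases h1 : j = t <;> by_cases h2 : k = t <;>
              first
              | exact absurd (h1.trans h2.symm) hjk
              | simp [h1, h2, gm2, gm0]), Finset.prod_const_one]
          have hkj : ¬ k = j := fun h => hjk h.symm
          simp [hjk, hkj]
        · refine (Finset.prod_eq_zero (Finset.mem_univ m) ?_).trans ?_
          · have hjm : ¬ j = m := hlm
            have hkm' : ¬ k = m := hkm
            simp [hjm, hkm', gm1]
          · have hjm : ¬ j = m := hlm
            simp [hjm, hkm]
      · by_cases hjm : j = m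
        · subst hjm
          by_cases hkl : k = l
          · subst hkl
            rw [Finset.prod_congr rfl (fun t _ => show gm _ = (1:ℝ) from by
              by_cases h1 : j = t <;> by_cases h2 : k = t <;>
                first
                | exact absurd (h1.trans h2.symm) hjk
                | simp [h1, h2, gm2, gm0]), Finset.prod_const_one]
            have hkj : ¬ k = j := fun h => hjk h.symm
            simp [hjk, hjl, hkj]
          · refine (Finset.prod_eq_zero (Finset.mem_univ l) ?_).trans ?_
            · have hjl' : ¬ j = l := hjl
              have hkl' : ¬ k = l := hkl
              simp [hjl', hkl', gm1]
            · simp [hjl, hkl, hlm]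
        · refine (Finset.prod_eq_zero (Finset.mem_univ j) ?_).trans ?_
          · have hkj : ¬ k = j := fun h => hjk h.symm
            have hlj : ¬ l = j := fun h => hjl h.symm
            have hmj : ¬ m = j := fun h => hjm h.symm
            simp [hkj, hlj, hmj, gm1]
          · simp [hjk, hjl, hjm]

open Finset

lemma quad_expand {n : ℕ} (a b : Fin n → ℝ) (ζ : Fin n → ℝ) :
    ((∑ j, a j * ζ j) * (∑ l, b l * ζ l)) ^ 2
      = ∑ j, ∑ k, ∑ l, ∑ m, (a j * a k * b l * b m) * (ζ j * ζ k * ζ l * ζ m) := by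
  rw [sq, mul_mul_mul_comm, Finset.sum_mul_sum, Finset.sum_mul_sum, Finset.sum_mul_sum]
  refine Finset.sum_congr rfl fun j _ => ?_
  rw [Finset.sum_congr rfl (fun l _ => Finset.sum_mul_sum univ univ _ _), Finset.sum_comm]
  exact Finset.sum_congr rfl fun k _ => Finset.sum_congr rfl fun l _ =>
    Finset.sum_congr rfl fun m _ => by ring

open Finset

lemma eval1 {n : ℕ} (a b : Fin n → ℝ) :
    ∑ j, ∑ k, ∑ l, ∑ m, (a j * a k * b l * b m) *
        ((if j = k then (1:ℝ) else 0) * (if l = m then 1 else 0))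
      = (∑ j, a j ^ 2) * (∑ l, b l ^ 2) := by
  simp only [mul_ite, ite_mul, mul_zero, zero_mul, mul_one, one_mul,
    Finset.sum_ite_eq, Finset.sum_ite_eq', Finset.mem_univ, if_true]
  rw [Finset.sum_congr rfl fun x _ => Finset.sum_comm]
  simp only [Finset.sum_ite_eq, Finset.mem_univ, if_true]
  rw [Finset.sum_mul_sum]
  exact Finset.sum_congr rfl fun x _ => Finset.sum_congr rfl fun y _ => by ring

lemma eval2 {n : ℕ} (a b : Fin n → ℝ) :
    ∑ j, ∑ k, ∑ l, ∑ m, (a j * a k * b l * b m) *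
        ((if j = l then (1:ℝ) else 0) * (if k = m then 1 else 0))
      = (∑ j, a j * b j) ^ 2 := by
  simp only [mul_ite, ite_mul, mul_zero, zero_mul, mul_one, one_mul,
    Finset.sum_ite_eq, Finset.sum_ite_eq', Finset.mem_univ, if_true]
  rw [sq, Finset.sum_mul_sum]
  exact Finset.sum_congr rfl fun x _ => Finset.sum_congr rfl fun y _ => by ring

lemma eval3 {n : ℕ} (a b : Fin n → ℝ) :
    ∑ j, ∑ k, ∑ l, ∑ m, (a j * a k * b l * b m) *
        ((if j = m then (1:ℝ) else 0) * (if k = l then 1 else 0))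
      = (∑ j, a j * b j) ^ 2 := by
  simp only [mul_ite, ite_mul, mul_zero, zero_mul, mul_one, one_mul,
    Finset.sum_ite_eq, Finset.sum_ite_eq', Finset.mem_univ, if_true]
  rw [Finset.sum_congr rfl fun x _ => Finset.sum_congr rfl fun y _ => Finset.sum_comm]
  simp only [Finset.sum_ite_eq, Finset.sum_ite_eq', Finset.mem_univ, if_true]
  rw [sq, Finset.sum_mul_sum]
  exact Finset.sum_congr rfl fun x _ => Finset.sum_congr rfl fun y _ => by ring

lemma quad_eval {n : ℕ} (a b : Fin n → ℝ) :
    ∑ j, ∑ k, ∑ l, ∑ m, (a j * a k * b l * b m) *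
      ((if j = k then (1:ℝ) else 0) * (if l = m then 1 else 0)
        + (if j = l then 1 else 0) * (if k = m then 1 else 0)
        + (if j = m then 1 else 0) * (if k = l then 1 else 0))
      = (∑ j, a j ^ 2) * (∑ l, b l ^ 2) + 2 * (∑ j, a j * b j) ^ 2 := by
  simp only [mul_add, Finset.sum_add_distrib]
  rw [eval1, eval2, eval3]
  ring

open Matrix MeasureTheory ProbabilityTheory Finset

lemma integrable_M2 {n : ℕ} (j k : Fin n) :
    Integrable (fun ζ : Fin n → ℝ => ζ j * ζ k)
      (Measure.pi fun _ => gaussianReal 0 1) := by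
  have h := integrable_pi_gauss
    (fun t x => x ^ ((if j = t then 1 else 0) + (if k = t then 1 else 0)))
    (fun t => integrable_pow_gm _)
  exact h.congr (Filter.Eventually.of_forall fun ζ => (prod_pow_two j k ζ).symm)

lemma integrable_M4 {n : ℕ} (j k l m : Fin n) :
    Integrable (fun ζ : Fin n → ℝ => ζ j * ζ k * ζ l * ζ m)
      (Measure.pi fun _ => gaussianReal 0 1) := by
  have h := integrable_pi_gauss
    (fun t x => x ^ ((if j = t then 1 else 0) + (if k = t then 1 else 0)
      + (if l = t then 1 else 0) + (if m = t then 1 else 0)))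
    (fun t => integrable_pow_gm _)
  exact h.congr (Filter.Eventually.of_forall fun ζ => (prod_pow_four j k l m ζ).symm)

lemma first_moment {n : ℕ} (a b : Fin n → ℝ) :
    (∫ ζ : Fin n → ℝ, (∑ j, a j * ζ j) * (∑ k, b k * ζ k)
        ∂(Measure.pi fun _ => gaussianReal 0 1)) = ∑ j, a j * b j := by
  have h1 : (fun ζ : Fin n → ℝ => (∑ j, a j * ζ j) * (∑ k, b k * ζ k))
      = fun ζ => ∑ j, ∑ k, (a j * b k) * (ζ j * ζ k) := by
    funext ζ
    rw [Finset.sum_mul_sum]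
    exact Finset.sum_congr rfl fun j _ => Finset.sum_congr rfl fun k _ => by ring
  rw [h1, integral_finset_sum _ (fun j _ =>
    integrable_finset_sum _ (fun k _ => (integrable_M2 j k).const_mul _))]
  rw [Finset.sum_congr rfl fun j _ => integral_finset_sum _
    (fun k _ => (integrable_M2 j k).const_mul _)]
  simp only [integral_const_mul, gauss_M2, mul_ite, mul_one, mul_zero,
    Finset.sum_ite_eq, Finset.mem_univ, if_true]

lemma second_moment {n : ℕ} (a b : Fin n → ℝ) :
    (∫ ζ : Fin n → ℝ, ((∑ j, a j * ζ j) * (∑ k, b k * ζ k)) ^ 2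
        ∂(Measure.pi fun _ => gaussianReal 0 1))
      = (∑ j, a j ^ 2) * (∑ l, b l ^ 2) + 2 * (∑ j, a j * b j) ^ 2 := by
  have h1 : (fun ζ : Fin n → ℝ => ((∑ j, a j * ζ j) * (∑ k, b k * ζ k)) ^ 2)
      = fun ζ => ∑ j, ∑ k, ∑ l, ∑ m,
          (a j * a k * b l * b m) * (ζ j * ζ k * ζ l * ζ m) :=
    funext fun ζ => quad_expand a b ζ
  rw [h1]
  rw [integral_finset_sum _ (fun j _ => integrable_finset_sum _ (fun k _ =>
    integrable_finset_sum _ (fun l _ => integrable_finset_sum _ (fun m _ =>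
      (integrable_M4 j k l m).const_mul _))))]
  rw [Finset.sum_congr rfl fun j _ => integral_finset_sum _ (fun k _ =>
    integrable_finset_sum _ (fun l _ => integrable_finset_sum _ (fun m _ =>
      (integrable_M4 j k l m).const_mul _)))]
  rw [Finset.sum_congr rfl fun j _ => Finset.sum_congr rfl fun k _ =>
    integral_finset_sum _ (fun l _ => integrable_finset_sum _ (fun m _ =>
      (integrable_M4 j k l m).const_mul _))]
  rw [Finset.sum_congr rfl fun j _ => Finset.sum_congr rfl fun k _ =>
    Finset.sum_congr rfl fun l _ => integral_finset_sum _ (fun m _ =>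
      (integrable_M4 j k l m).const_mul _)]
  simp only [integral_const_mul, gauss_M4]
  exact quad_eval a b

/-- For symmetric matrices `Z₁, Z₂, Z, Δ` and a standard Gaussian vector `ζ`, the
estimator `θ̂ᵢ = (Z₁ Δ Z₂ ζ)ᵢ (Z ζ)ᵢ` satisfies `E[θ̂ᵢ] = (Z₁ Δ Z₂ Z)ᵢᵢ` and
`E[θ̂ᵢ²] ≤ 3 (Z₁ Δ Z₂² Δ Z₁)ᵢᵢ (Z²)ᵢᵢ`. -/
theorem stmt_18 {n : ℕ} (Z₁ Z₂ Z Δ : Matrix (Fin n) (Fin n) ℝ)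
    (hZ₁ : Z₁.IsSymm) (hZ₂ : Z₂.IsSymm) (hZ : Z.IsSymm) (hΔ : Δ.IsSymm) (i : Fin n) :
    (∫ ζ : Fin n → ℝ, ((Z₁ * Δ * Z₂).mulVec ζ i) * (Z.mulVec ζ i)
        ∂(Measure.pi fun _ : Fin n => gaussianReal 0 1)) = (Z₁ * Δ * Z₂ * Z) i i ∧
    (∫ ζ : Fin n → ℝ, (((Z₁ * Δ * Z₂).mulVec ζ i) * (Z.mulVec ζ i)) ^ 2
        ∂(Measure.pi fun _ : Fin n => gaussianReal 0 1)) ≤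
      3 * (Z₁ * Δ * (Z₂ * Z₂) * Δ * Z₁) i i * (Z * Z) i i := by
  set A := Z₁ * Δ * Z₂ with hA
  have hmv : ∀ (M : Matrix (Fin n) (Fin n) ℝ) (ζ : Fin n → ℝ),
      M.mulVec ζ i = ∑ j, M i j * ζ j := by
    intro M ζ; simp [Matrix.mulVec, dotProduct]
  have ha2 : (Z₁ * Δ * (Z₂ * Z₂) * Δ * Z₁) i i = ∑ j, (A i j) ^ 2 := by
    have hAt : Z₁ * Δ * (Z₂ * Z₂) * Δ * Z₁ = A * Aᵀ := by
      rw [hA, Matrix.transpose_mul, Matrix.transpose_mul, hZ₁.eq, hZ₂.eq, hΔ.eq]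
      noncomm_ring
    rw [hAt, Matrix.mul_apply]
    exact Finset.sum_congr rfl fun j _ => by rw [Matrix.transpose_apply, sq]
  have hb2 : (Z * Z) i i = ∑ j, (Z i j) ^ 2 := by
    rw [Matrix.mul_apply]
    exact Finset.sum_congr rfl fun j _ => by rw [hZ.apply, sq]
  constructor
  · have h := first_moment (fun j => A i j) (fun j => Z i j)
    simp only [hmv]
    rw [h, Matrix.mul_apply]
    exact Finset.sum_congr rfl fun j _ => by rw [hZ.apply]
  · have h := second_moment (fun j => A i j) (fun j => Z i j)
    simp only [hmv]
    rw [h, ha2, hb2]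
    have hcs := Finset.sum_mul_sq_le_sq_mul_sq Finset.univ
      (fun j => A i j) (fun j => Z i j)
    nlinarith [hcs]
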